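/- For every θ ∈ ℝ, the vector-valued double integral ∫₀^{2π} ∫₀^1 ρ • (cos φ, sin φ) · ((1 − ρ cos(θ − φ))/π) · ρ dρ dφ equals −(cos θ, sin θ)/4. (That is, under the uniform prior on the disk, the posterior expected location of the light source given shadow angle θ is E(μ | Θ = θ) = −X/4, where X = (cos θ, sin θ).) -/

import Mathlib

open Real MeasureTheory intervalIntegral

lemma intervalIntegral_pair (f g : ℝ → ℝ) (a b : ℝ)
    (hf : IntervalIntegrable f volume a b) (hg : IntervalIntegrable g volume a b) :
    (∫ x in a..b, ((f x, g x) : ℝ × ℝ)) = (∫ x in a..b, f x, ∫ x in a..b, g x) := by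
  simp only [intervalIntegral]
  rw [integral_pair hf.1 hg.1, integral_pair hf.2 hg.2, Prod.mk_sub_mk]

lemma inner_int (c : ℝ) :
    (∫ ρ in (0:ℝ)..1, ρ * ((1 - ρ * c) / π) * ρ) = (1/3 - c/4) / π := by
  have h : ∀ x ∈ Set.uIcc (0:ℝ) 1,
      HasDerivAt (fun ρ : ℝ => ρ ^ 3 / (3 * π) - c * ρ ^ 4 / (4 * π))
        (x * ((1 - x * c) / π) * x) x := by
    intro x _
    have h1 : HasDerivAt (fun ρ : ℝ => ρ ^ 3 / (3 * π)) (3 * x ^ 2 / (3 * π)) x :=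
      ((hasDerivAt_pow 3 x).div_const (3 * π)).congr_deriv (by ring)
    have h2 : HasDerivAt (fun ρ : ℝ => c * ρ ^ 4 / (4 * π)) (c * (4 * x ^ 3) / (4 * π)) x :=
      (((hasDerivAt_pow 4 x).const_mul c).div_const (4 * π)).congr_deriv (by ring)
    have := h1.sub h2
    convert this using 1
    · rfl
    · rfl
    · rfl
    field_simp
  rw [intervalIntegral.integral_eq_sub_of_hasDerivAt h (by
    apply Continuous.intervalIntegrable; continuity)]
  have hπ : (π : ℝ) ≠ 0 := Real.pi_ne_zero
  field_simp
  ring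

lemma fst_int (θ : ℝ) :
    (∫ φ in (0:ℝ)..(2 * π), ((1/3 - Real.cos (θ - φ)/4) / π) * Real.cos φ)
      = -(Real.cos θ) / 4 := by
  have hπ : (π : ℝ) ≠ 0 := Real.pi_ne_zero
  have h : ∀ x ∈ Set.uIcc (0:ℝ) (2 * π),
      HasDerivAt (fun φ : ℝ => Real.sin φ / (3 * π)
          - (Real.cos θ * (φ + Real.sin φ * Real.cos φ)
              + Real.sin θ * (Real.sin φ) ^ 2) / (8 * π))
        (((1/3 - Real.cos (θ - x)/4) / π) * Real.cos x) x := by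
    intro x _
    have hs := Real.hasDerivAt_sin x
    have hc := Real.hasDerivAt_cos x
    have h1 : HasDerivAt (fun φ : ℝ => Real.sin φ / (3 * π)) (Real.cos x / (3 * π)) x :=
      hs.div_const _
    have h2 : HasDerivAt (fun φ : ℝ => Real.cos θ * (φ + Real.sin φ * Real.cos φ)
        + Real.sin θ * (Real.sin φ) ^ 2)
        (Real.cos θ * (1 + (Real.cos x * Real.cos x + Real.sin x * (-Real.sin x)))
          + Real.sin θ * (2 * Real.sin x ^ 1 * Real.cos x)) x := by
      exact (((hasDerivAt_id x).add (hs.mul hc)).const_mul _).add ((hs.pow 2).const_mul _)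
    have := h1.sub (h2.div_const (8 * π))
    convert this using 1
    · rfl
    · rfl
    · rfl
    rw [Real.cos_sub]
    have hp : Real.sin x ^ 2 + Real.cos x ^ 2 = 1 := Real.sin_sq_add_cos_sq x
    linear_combination (-(Real.cos θ)/(8*π)) * hp
  rw [intervalIntegral.integral_eq_sub_of_hasDerivAt h (by
    apply Continuous.intervalIntegrable; continuity)]
  simp [Real.sin_two_pi, Real.cos_two_pi]
  field_simp
  ring

lemma snd_int (θ : ℝ) :
    (∫ φ in (0:ℝ)..(2 * π), ((1/3 - Real.cos (θ - φ)/4) / π) * Real.sin φ)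
      = -(Real.sin θ) / 4 := by
  have hπ : (π : ℝ) ≠ 0 := Real.pi_ne_zero
  have h : ∀ x ∈ Set.uIcc (0:ℝ) (2 * π),
      HasDerivAt (fun φ : ℝ => -Real.cos φ / (3 * π)
          - (Real.cos θ * (Real.sin φ) ^ 2
              + Real.sin θ * (φ - Real.sin φ * Real.cos φ)) / (8 * π))
        (((1/3 - Real.cos (θ - x)/4) / π) * Real.sin x) x := by
    intro x _
    have hs := Real.hasDerivAt_sin x
    have hc := Real.hasDerivAt_cos x
    have h1 : HasDerivAt (fun φ : ℝ => -Real.cos φ / (3 * π)) (Real.sin x / (3 * π)) x := by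
      have := (hc.neg).div_const (3 * π)
      simpa using this
    have h2 : HasDerivAt (fun φ : ℝ => Real.cos θ * (Real.sin φ) ^ 2
        + Real.sin θ * (φ - Real.sin φ * Real.cos φ))
        (Real.cos θ * (2 * Real.sin x ^ 1 * Real.cos x)
          + Real.sin θ * (1 - (Real.cos x * Real.cos x + Real.sin x * (-Real.sin x)))) x := by
      exact ((hs.pow 2).const_mul _).add (((hasDerivAt_id x).sub (hs.mul hc)).const_mul _)
    have := h1.sub (h2.div_const (8 * π))
    convert this using 1
    · rfl
    · rfl
    · rfl
    rw [Real.cos_sub]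
    have hp : Real.sin x ^ 2 + Real.cos x ^ 2 = 1 := Real.sin_sq_add_cos_sq x
    linear_combination (-(Real.sin θ)/(8*π)) * hp
  rw [intervalIntegral.integral_eq_sub_of_hasDerivAt h (by
    apply Continuous.intervalIntegrable; continuity)]
  simp [Real.sin_two_pi, Real.cos_two_pi]
  field_simp
  ring

/-- Under the uniform prior on the disk, the posterior expected location of the
light source given shadow angle `θ` is `-X/4`, where `X = (cos θ, sin θ)`. -/
theorem posterior_mean (θ : ℝ) :
    (∫ φ in (0 : ℝ)..(2 * π), ∫ ρ in (0 : ℝ)..1,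
        (ρ * ((1 - ρ * Real.cos (θ - φ)) / π) * ρ) • ((Real.cos φ, Real.sin φ) : ℝ × ℝ))
      = -((4 : ℝ)⁻¹) • ((Real.cos θ, Real.sin θ) : ℝ × ℝ) := by
  have hin : ∀ φ : ℝ,
      (∫ ρ in (0:ℝ)..1,
          (ρ * ((1 - ρ * Real.cos (θ - φ)) / π) * ρ) • ((Real.cos φ, Real.sin φ) : ℝ × ℝ))
        = ((((1:ℝ)/3 - Real.cos (θ - φ)/4) / π) * Real.cos φ,
            (((1:ℝ)/3 - Real.cos (θ - φ)/4) / π) * Real.sin φ) := by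
    intro φ
    rw [intervalIntegral.integral_smul_const, inner_int]
    simp [Prod.smul_mk, smul_eq_mul]
  simp only [hin]
  rw [intervalIntegral_pair _ _ _ _
      (by apply Continuous.intervalIntegrable; continuity)
      (by apply Continuous.intervalIntegrable; continuity),
    fst_int, snd_int]
  simp [Prod.smul_mk, smul_eq_mul]
  constructor <;> ring
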